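/- Let G=(V,E) be a finite connected graph, i ∈ V, and (a₁,…,a_{|V|−1}) an i-ordering of V∖{i}. Then for any two height configurations h, h' ∈ ℕ₀^V both attaining their maximum at i with the same maximal value, the configurations T_{a_{|V|−1}} ⋯ T_{a_1} h and T_{a_{|V|−1}} ⋯ T_{a_1} h' agree after subtracting their maxima; equivalently, the resulting profile seen from the maximum x^{(i)} depends only on i and the chosen ordering, not on the initial profile. Moreover min_j x^{(i)}_j ≥ −(|V|−1). -/

import Mathlib

-- Adding a particle at `i` with screening: the new particle lands at one plus the
-- maximal height in the closed neighborhood of `i`.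
open Classical in
noncomputable def drop {V : Type*} [Fintype V] (G : SimpleGraph V) (i : V) (h : V → ℕ) :
    V → ℕ :=
  fun j => if j = i then (Finset.univ.filter fun k => k = i ∨ G.Adj i k).sup h + 1 else h j

-- Maximal height of a profile.
def maxH {V : Type*} [Fintype V] (h : V → ℕ) : ℕ := Finset.univ.sup h

-- Height profile seen from the maximum.
def prof {V : Type*} [Fintype V] (h : V → ℕ) : V → ℤ := fun j => (h j : ℤ) - (maxH h : ℤ)

open Classical in
lemma drop_apply_self {V : Type*} [Fintype V] (G : SimpleGraph V) (v : V) (h : V → ℕ) :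
    drop G v h v = (Finset.univ.filter fun k => k = v ∨ G.Adj v k).sup h + 1 := by
  simp [drop]

lemma drop_apply_ne {V : Type*} [Fintype V] (G : SimpleGraph V) (v j : V) (h : V → ℕ)
    (hj : j ≠ v) : drop G v h j = h j := by
  simp [drop, hj]

open Classical in
lemma inv_lemma {V : Type*} [Fintype V] [DecidableEq V] (G : SimpleGraph V) (i : V)
    (M : ℕ) (h : V → ℕ) (hmax : ∀ j, h j ≤ M) (hi : h i = M) :
    ∀ L : List V, i ∉ L → L.Nodup →
      (∀ k (hk : k < L.length), ∃ j, (j = i ∨ j ∈ L.take k) ∧ G.Adj L[k] j) →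
      ∀ j,
        ((j = i ∨ j ∈ L) →
          L.foldl (fun c v => drop G v c) h j
            = L.foldl (fun c v => drop G v c) (fun _ => M) j
          ∧ M ≤ L.foldl (fun c v => drop G v c) (fun _ => M) j)
        ∧ L.foldl (fun c v => drop G v c) (fun _ => M) j ≤ M + L.length
        ∧ (¬(j = i ∨ j ∈ L) →
            L.foldl (fun c v => drop G v c) h j = h j
            ∧ L.foldl (fun c v => drop G v c) (fun _ => M) j = M) := by
  intro L
  induction L using List.reverseRecOn with
  | nil =>
    intro _ _ _ j
    refine ⟨fun hj => ?_, by simp, fun _ => ⟨rfl, rfl⟩⟩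
    simp only [List.not_mem_nil, or_false] at hj
    subst hj
    simp [hi]
  | append_singleton L v IH =>
    intro hiL hnd hord j
    have hiL' : i ∉ L ∧ i ≠ v := by
      simp only [List.mem_append, List.mem_singleton, not_or] at hiL
      exact hiL
    have hnd' : L.Nodup ∧ v ∉ L := by
      rw [List.nodup_append] at hnd
      refine ⟨hnd.1, fun hv => hnd.2.2 v hv v (List.mem_singleton_self v) rfl⟩
    have hordL : ∀ k (hk : k < L.length), ∃ j, (j = i ∨ j ∈ L.take k) ∧ G.Adj L[k] j := by
      intro k hk
      obtain ⟨j₀, hj₀, hadj⟩ := hord k (by simp; omega)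
      refine ⟨j₀, ?_, ?_⟩
      · rwa [List.take_append_of_le_length (le_of_lt hk)] at hj₀
      · rwa [List.getElem_append_left hk] at hadj
    have IH' := IH hiL'.1 hnd'.1 hordL
    set f := L.foldl (fun c v => drop G v c) h with hf
    set g := L.foldl (fun c v => drop G v c) (fun _ => M) with hg
    -- the ordering condition at the last position
    obtain ⟨j₀, hj₀mem, hj₀adj⟩ := hord L.length (by simp)
    have hlast : (L ++ [v])[L.length] = v := by
      rw [List.getElem_append_right (le_refl _)]
      simp
    rw [hlast] at hj₀adj
    rw [List.take_left] at hj₀mem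
    have hj₀g : f j₀ = g j₀ ∧ M ≤ g j₀ := (IH' j₀).1 hj₀mem
    have hsup : ∀ N : Finset V, j₀ ∈ N → N.sup f = N.sup g := by
      intro N hj₀N
      apply le_antisymm
      · apply Finset.sup_le
        intro x hx
        by_cases hx' : x = i ∨ x ∈ L
        · rw [((IH' x).1 hx').1]
          exact Finset.le_sup hx
        · calc f x = h x := ((IH' x).2.2 hx').1
            _ ≤ M := hmax x
            _ ≤ g j₀ := hj₀g.2
            _ ≤ N.sup g := Finset.le_sup hj₀N
      · apply Finset.sup_le
        intro x hx
        by_cases hx' : x = i ∨ x ∈ L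
        · rw [← ((IH' x).1 hx').1]
          exact Finset.le_sup hx
        · calc g x = M := ((IH' x).2.2 hx').2
            _ ≤ g j₀ := hj₀g.2
            _ = f j₀ := hj₀g.1.symm
            _ ≤ N.sup f := Finset.le_sup hj₀N
    have hsup2 : ∀ N : Finset V, j₀ ∈ N → N.sup f + 1 = N.sup g + 1 ∧ M ≤ N.sup g + 1 := by
      intro N hj₀N
      refine ⟨by rw [hsup N hj₀N], ?_⟩
      exact le_trans hj₀g.2 (le_trans (Finset.le_sup hj₀N) (Nat.le_succ _))
    have hfold : ∀ c : V → ℕ, (L ++ [v]).foldl (fun c v => drop G v c) c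
        = drop G v (L.foldl (fun c v => drop G v c) c) := by
      intro c; rw [List.foldl_append]; rfl
    rw [hfold h, hfold (fun _ => M), ← hf, ← hg]
    refine ⟨?_, ?_, ?_⟩
    · intro hmem
      by_cases hjv : j = v
      · subst hjv
        rw [drop_apply_self, drop_apply_self]
        refine hsup2 _ ?_
        simp only [Finset.mem_filter, Finset.mem_univ, true_and]
        exact Or.inr hj₀adj
      · rw [drop_apply_ne G v j _ hjv, drop_apply_ne G v j _ hjv]
        apply (IH' j).1
        rcases hmem with h1 | h2
        · exact Or.inl h1
        · rcases List.mem_append.mp h2 with h3 | h4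
          · exact Or.inr h3
          · exact absurd (List.mem_singleton.mp h4) hjv
    · by_cases hjv : j = v
      · subst hjv
        rw [drop_apply_self]
        refine le_trans (Nat.succ_le_succ (Finset.sup_le fun x _ => (IH' x).2.1)) ?_
        simp [Nat.add_assoc]
      · rw [drop_apply_ne G v j _ hjv]
        calc g j ≤ M + L.length := (IH' j).2.1
          _ ≤ M + (L ++ [v]).length := by simp
    · intro hjmem
      simp only [List.mem_append, List.mem_singleton, not_or] at hjmem
      have hjv : j ≠ v := hjmem.2.2
      rw [drop_apply_ne G v j _ hjv, drop_apply_ne G v j _ hjv]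
      exact (IH' j).2.2 (by tauto)

/-- Dropping particles along an `i`-ordering erases the memory of the initial profile:
if `h, h'` both attain their maximum at `i` with the same maximal value, then after
applying `T_{a_{|V|−1}} ⋯ T_{a_1}` the two configurations have the same profile seen
from the maximum, and this profile `x⁽ⁱ⁾` has depth at most `|V| − 1`. -/
theorem stmt12 {V : Type*} [Fintype V] [DecidableEq V] (G : SimpleGraph V)
    (hconn : G.Connected) (i : V)
    (a : Fin (Fintype.card V - 1) → V)
    (hinj : Function.Injective a) (hrange : Set.range a = {i}ᶜ)
    (hord : ∀ k, ∃ j, (j = i ∨ ∃ l, l < k ∧ a l = j) ∧ G.Adj (a k) j)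
    (h h' : V → ℕ)
    (hmax : ∀ j, h j ≤ h i) (hmax' : ∀ j, h' j ≤ h' i) (heq : h i = h' i) :
    (∀ j, prof ((List.ofFn a).foldl (fun c v => drop G v c) h) j =
      prof ((List.ofFn a).foldl (fun c v => drop G v c) h') j)
    ∧ (∀ j, -((Fintype.card V : ℤ) - 1) ≤
        prof ((List.ofFn a).foldl (fun c v => drop G v c) h) j) := by
  set M := h i with hM
  have heqM : h' i = M := heq.symm
  set L := List.ofFn a with hL
  have hlen : L.length = Fintype.card V - 1 := List.length_ofFn
  have hiL : i ∉ L := by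
    intro hmem
    have : i ∈ Set.range a := List.mem_ofFn.mp hmem
    rw [hrange] at this
    exact this rfl
  have hnd : L.Nodup := List.nodup_ofFn.mpr hinj
  have hordL : ∀ k (hk : k < L.length), ∃ j, (j = i ∨ j ∈ L.take k) ∧ G.Adj L[k] j := by
    intro k hk
    have hk' : k < Fintype.card V - 1 := hlen ▸ hk
    obtain ⟨j₀, hj₀, hadj⟩ := hord ⟨k, hk'⟩
    refine ⟨j₀, ?_, ?_⟩
    · rcases hj₀ with h1 | ⟨l, hl, hal⟩
      · exact Or.inl h1
      · right
        have hlk : (l : ℕ) < k := hl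
        have hlt : (l : ℕ) < (L.take k).length := by
          simp [hL, List.length_take, List.length_ofFn]
          omega
        have : (L.take k)[(l : ℕ)] = j₀ := by
          simp only [hL, List.getElem_take, List.getElem_ofFn]
          simpa using hal
        exact this ▸ List.getElem_mem hlt
    · have : L[k] = a ⟨k, hk'⟩ := by
        simp only [hL, List.getElem_ofFn]
      rw [this]
      exact hadj
  have hall : ∀ j : V, j = i ∨ j ∈ L := by
    intro j
    by_cases hj : j = i
    · exact Or.inl hj
    · right
      have : j ∈ Set.range a := by rw [hrange]; exact hj
      exact List.mem_ofFn.mpr this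
  have key := inv_lemma G i M h hmax hM.symm L hiL hnd hordL
  have key' := inv_lemma G i M h' (fun j => heqM ▸ hmax' j) heqM L hiL hnd hordL
  set f := L.foldl (fun c v => drop G v c) h with hfdef
  set f' := L.foldl (fun c v => drop G v c) h' with hf'def
  set g := L.foldl (fun c v => drop G v c) (fun _ => M) with hgdef
  have hfg : ∀ j, f j = g j := fun j => ((key j).1 (hall j)).1
  have hf'g : ∀ j, f' j = g j := fun j => ((key' j).1 (hall j)).1
  have hff' : f = f' := by
    funext j; rw [hfg j, hf'g j]
  have hMle : ∀ j, M ≤ f j := fun j => (hfg j) ▸ ((key j).1 (hall j)).2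
  have hub : ∀ j, f j ≤ M + (Fintype.card V - 1) := fun j =>
    (hfg j) ▸ (hlen ▸ (key j).2.1)
  have hcard : 1 ≤ Fintype.card V := Fintype.card_pos_iff.mpr hconn.nonempty
  constructor
  · intro j; rw [hff']
  · intro j
    have hsup : maxH f ≤ M + (Fintype.card V - 1) := Finset.sup_le fun x _ => hub x
    have hMj := hMle j
    simp only [prof]
    omega
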